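/- Let n ≥ 2, let T be the complete n-ary tree of height h ≥ 2, and let r be a positive integer with 1 ≤ r ≤ 2h − 1. Then the curling number of the r-th power T^r equals n^h. -/

import Mathlib

open Finset

/-- The degree of a vertex `v` in a simple graph `G`: the number of its neighbours. -/
noncomputable def gdeg {V : Type*} (G : SimpleGraph V) (v : V) : ℕ :=
  (G.neighborSet v).ncard

/-- The curling number of a finite simple graph: the maximum number of vertices
of `G` sharing a common degree. -/
noncomputable def curlingNumber {V : Type*} [Fintype V] (G : SimpleGraph V) : ℕ :=
  Finset.univ.sup fun v => (Finset.univ.filter fun u => gdeg G u = gdeg G v).card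

/-- The `r`-th power of a simple graph `G`: same vertex set, two distinct vertices
adjacent iff their distance in `G` is (finite and) at most `r`. -/
def SimpleGraph.power {V : Type*} (G : SimpleGraph V) (r : ℕ) : SimpleGraph V where
  Adj u v := u ≠ v ∧ G.Reachable u v ∧ G.dist u v ≤ r
  symm := ⟨by
    rintro u v ⟨h1, h2, h3⟩
    exact ⟨h1.symm, h2.symm, by rwa [SimpleGraph.dist_comm]⟩⟩
  loopless := ⟨by
    rintro v ⟨h1, -, -⟩
    exact h1 rfl⟩

/-- The complete `n`-ary tree of height `h`: the vertices at depth `i` (`0 ≤ i ≤ h`) are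
indexed by `Fin (n ^ i)`, and vertex `k` at depth `i + 1` is a child of vertex `k / n`
at depth `i`. -/
def completeNaryTree (n h : ℕ) : SimpleGraph (Σ i : Fin (h + 1), Fin (n ^ (i : ℕ))) where
  Adj u v :=
    ((u.1 : ℕ) + 1 = (v.1 : ℕ) ∧ (v.2 : ℕ) / n = (u.2 : ℕ)) ∨
    ((v.1 : ℕ) + 1 = (u.1 : ℕ) ∧ (u.2 : ℕ) / n = (v.2 : ℕ))
  symm := ⟨fun u v h => h.symm⟩
  loopless := ⟨fun u h => by rcases h with ⟨h1, -⟩ | ⟨h1, -⟩ <;> omega⟩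


namespace NaryAux

/-- ancestor-equality predicate: depth-`k` ancestors of `(i,x)` and `(j,y)` agree. -/
def Anc (n i j x y k : ℕ) : Prop := x / n ^ (i - k) = y / n ^ (j - k)

instance (n i j x y : ℕ) : DecidablePred (Anc n i j x y) := fun _ => by
  unfold Anc; infer_instance

/-- depth of least common ancestor -/
def lcaD (n i j x y : ℕ) : ℕ := Nat.findGreatest (Anc n i j x y) (min i j)

/-- tree distance -/
def tdist (n i j x y : ℕ) : ℕ := i + j - 2 * lcaD n i j x y

lemma anc_zero {n i j x y : ℕ} (hx : x < n ^ i) (hy : y < n ^ j) : Anc n i j x y 0 := by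
  unfold Anc
  simp [Nat.div_eq_of_lt hx, Nat.div_eq_of_lt hy]

lemma anc_down {n i j x y k k' : ℕ} (h : Anc n i j x y k) (hk' : k' ≤ k) (hki : k ≤ i)
    (hkj : k ≤ j) : Anc n i j x y k' := by
  unfold Anc at h ⊢
  have e1 : i - k' = (i - k) + (k - k') := by omega
  have e2 : j - k' = (j - k) + (k - k') := by omega
  rw [e1, e2, pow_add, pow_add, ← Nat.div_div_eq_div_mul, ← Nat.div_div_eq_div_mul, h]

lemma lcaD_le {n i j x y : ℕ} : lcaD n i j x y ≤ min i j := Nat.findGreatest_le _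

lemma anc_lcaD {n i j x y : ℕ} (hx : x < n ^ i) (hy : y < n ^ j) :
    Anc n i j x y (lcaD n i j x y) :=
  Nat.findGreatest_spec (Nat.zero_le _) (anc_zero hx hy)

lemma le_lcaD {n i j x y k : ℕ} (hk : k ≤ min i j) (h : Anc n i j x y k) :
    k ≤ lcaD n i j x y := Nat.le_findGreatest hk h

lemma anc_iff_le_lcaD {n i j x y k : ℕ} (hx : x < n ^ i) (hy : y < n ^ j) (hk : k ≤ min i j) :
    Anc n i j x y k ↔ k ≤ lcaD n i j x y := by
  refine ⟨le_lcaD hk, fun h => ?_⟩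
  exact anc_down (anc_lcaD hx hy) h (le_trans lcaD_le (min_le_left _ _))
    (le_trans lcaD_le (min_le_right _ _))

lemma anc_comm {n i j x y k : ℕ} (h : Anc n i j x y k) : Anc n j i y x k := h.symm

lemma lcaD_comm {n i j x y : ℕ} : lcaD n i j x y = lcaD n j i y x := by
  unfold lcaD
  rw [min_comm]
  congr 1
  ext k
  exact ⟨anc_comm, anc_comm⟩

lemma tdist_comm {n i j x y : ℕ} : tdist n i j x y = tdist n j i y x := by
  unfold tdist
  rw [lcaD_comm, Nat.add_comm]

lemma lcaD_self {n i x : ℕ} : lcaD n i i x x = i := by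
  have h1 : Anc n i i x x i := by unfold Anc; rfl
  have := le_lcaD (by omega) h1
  have := lcaD_le (n := n) (i := i) (j := i) (x := x) (y := x)
  omega

lemma tdist_self {n i x : ℕ} : tdist n i i x x = 0 := by
  unfold tdist; rw [lcaD_self]; omega

end NaryAux

namespace NaryAux

lemma anc_child_iff {n i j x y' k : ℕ} (hk : k ≤ j) :
    Anc n i (j + 1) x y' k ↔ Anc n i j x (y' / n) k := by
  unfold Anc
  have e : j + 1 - k = (j - k) + 1 := by omega
  rw [e, pow_succ, Nat.div_div_eq_div_mul, mul_comm]

lemma anc_child_top {n i j x y' : ℕ} (hij : j + 1 ≤ i) (h : Anc n i (j + 1) x y' (j + 1)) :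
    Anc n i j x (y' / n) j := by
  unfold Anc at h ⊢
  simp only [Nat.sub_self, pow_zero, Nat.div_one] at h
  have e : i - j = (i - (j + 1)) + 1 := by omega
  rw [e, pow_succ, ← Nat.div_div_eq_div_mul, h]
  simp

lemma div_lt_pow {n j y' : ℕ} (hn : 1 ≤ n) (hy : y' < n ^ (j + 1)) : y' / n < n ^ j := by
  rw [Nat.div_lt_iff_lt_mul (by omega)]
  calc y' < n ^ (j + 1) := hy
  _ = n ^ j * n := by rw [pow_succ]

lemma lcaD_parent_le_child {n i j x y' : ℕ} (hn : 1 ≤ n) (hx : x < n ^ i)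
    (hy : y' < n ^ (j + 1)) : lcaD n i j x (y' / n) ≤ lcaD n i (j + 1) x y' := by
  have hy' : y' / n < n ^ j := div_lt_pow hn hy
  have hanc := anc_lcaD hx hy'
  have hle : lcaD n i j x (y' / n) ≤ min i j := lcaD_le
  refine le_lcaD (by omega) ?_
  exact (anc_child_iff (by omega)).mpr hanc

lemma min_child_le_parent {n i j x y' : ℕ} (hx : x < n ^ i) (hy : y' < n ^ (j + 1)) :
    min (lcaD n i (j + 1) x y') j ≤ lcaD n i j x (y' / n) := by
  set Lc := lcaD n i (j + 1) x y' with hLc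
  have hanc : Anc n i (j + 1) x y' Lc := anc_lcaD hx hy
  have hle : Lc ≤ min i (j + 1) := lcaD_le
  rcases Nat.lt_or_ge Lc (j + 1) with hcase | hcase
  · have : Lc ≤ lcaD n i j x (y' / n) :=
      le_lcaD (by omega) ((anc_child_iff (by omega)).mp hanc)
    omega
  · have hLcj : Lc = j + 1 := by omega
    have hij : j + 1 ≤ i := by omega
    have htop : Anc n i j x (y' / n) j := anc_child_top hij (hLcj ▸ hanc)
    have : j ≤ lcaD n i j x (y' / n) := le_lcaD (by omega) htop
    omega

section Graph

variable {n h : ℕ}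

/-- The vertex type of the complete n-ary tree. -/
abbrev Vtx (n h : ℕ) := Σ i : Fin (h + 1), Fin (n ^ (i : ℕ))

/-- distance function on vertices -/
def dV (u v : Vtx n h) : ℕ := tdist n u.1 v.1 u.2 v.2

lemma dV_self (u : Vtx n h) : dV u u = 0 := tdist_self

lemma dV_step (hn : 1 ≤ n) {v w : Vtx n h} (hadj : (completeNaryTree n h).Adj v w)
    (u : Vtx n h) : dV u w ≤ dV u v + 1 := by
  obtain ⟨⟨i, hi⟩, ⟨x, hx⟩⟩ := u
  obtain ⟨⟨a, ha⟩, ⟨b, hb⟩⟩ := v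
  obtain ⟨⟨c, hc⟩, ⟨d, hd⟩⟩ := w
  simp only [completeNaryTree, Fin.val_mk] at hadj hx hb hd
  unfold dV tdist
  simp only [Fin.val_mk]
  rcases hadj with ⟨h1, h2⟩ | ⟨h1, h2⟩
  · -- w is child of v : c = a + 1, d / n = b
    subst h1
    subst h2
    have key := lcaD_parent_le_child (i := i) (x := x) hn hx hd
    have b1 : lcaD n i a x (d / n) ≤ min i a := lcaD_le
    have b2 : lcaD n i (a + 1) x d ≤ min i (a + 1) := lcaD_le
    omega
  · -- v is child of w : a = c + 1, b / n = d
    subst h1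
    subst h2
    have key := min_child_le_parent (i := i) (x := x) hx hb
    have b1 : lcaD n i c x (b / n) ≤ min i c := lcaD_le
    have b2 : lcaD n i (c + 1) x b ≤ min i (c + 1) := lcaD_le
    omega

lemma dV_walk_le (hn : 1 ≤ n) {u v : Vtx n h} (p : (completeNaryTree n h).Walk u v) :
    dV u v ≤ p.length := by
  induction p with
  | nil => simp [dV_self]
  | cons hadj q ih =>
    rename_i a b c
    have step := dV_step hn hadj.symm c
    have c1 : dV a c = dV c a := tdist_comm
    have c2 : dV b c = dV c b := tdist_comm
    simp only [SimpleGraph.Walk.length_cons]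
    omega

/-- helper to build vertices -/
def vert (n h : ℕ) (i : ℕ) (hi : i ≤ h) (x : ℕ) (hx : x < n ^ i) : Vtx n h :=
  ⟨⟨i, by omega⟩, ⟨x, hx⟩⟩

lemma vert_congr {i x x' : ℕ} (hi hi' : i ≤ h) (hx : x < n ^ i) (hx' : x' < n ^ i)
    (e : x = x') : vert n h i hi x hx = vert n h i hi' x' hx' := by subst e; rfl

lemma exists_walk_down (hn : 1 ≤ n) :
    ∀ (d k j : ℕ) (_ : j = k + d) (hk : k ≤ h) (hj : j ≤ h) (y : ℕ) (hy : y < n ^ j)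
      (hq : y / n ^ (j - k) < n ^ k),
      ∃ p : (completeNaryTree n h).Walk
        (vert n h k hk (y / n ^ (j - k)) hq) (vert n h j hj y hy),
        p.length = j - k := by
  intro d
  induction d with
  | zero =>
    intro k j hjk hk hj y hy hq
    have hjk' : j = k := by omega
    subst hjk'
    exact ⟨SimpleGraph.Walk.nil.copy (vert_congr hj hk hy hq (by simp)) rfl, by simp⟩
  | succ d ih =>
    intro k j hjk hk hj y hy hq
    have hj1 : j - 1 = k + d := by omega
    have hyn : y / n < n ^ (j - 1) := by
      have hj2 : j = (j - 1) + 1 := by omega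
      exact div_lt_pow hn (by rw [← hj2]; exact hy)
    have ecode : (y / n) / n ^ (j - 1 - k) = y / n ^ (j - k) := by
      rw [Nat.div_div_eq_div_mul, ← pow_succ']
      congr 2
      omega
    have hq' : (y / n) / n ^ (j - 1 - k) < n ^ k := by rw [ecode]; exact hq
    obtain ⟨p, hp⟩ := ih k (j - 1) hj1 hk (by omega) (y / n) hyn hq'
    have hadj : (completeNaryTree n h).Adj (vert n h (j - 1) (by omega) (y / n) hyn)
        (vert n h j hj y hy) := by
      refine Or.inl ?_
      constructor
      · simp [vert]; omega
      · simp [vert]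
    exact ⟨(p.concat hadj).copy (vert_congr _ _ hq' hq ecode) rfl,
      by simp [SimpleGraph.Walk.length_concat, hp]; omega⟩

lemma dV_reach_dist (hn : 1 ≤ n) (u v : Vtx n h) :
    (completeNaryTree n h).Reachable u v ∧ (completeNaryTree n h).dist u v ≤ dV u v := by
  obtain ⟨⟨i, hi⟩, ⟨x, hx⟩⟩ := u
  obtain ⟨⟨j, hj⟩, ⟨y, hy⟩⟩ := v
  have hi' : i ≤ h := by omega
  have hj' : j ≤ h := by omega
  set L := lcaD n i j x y with hL
  have hLm : L ≤ min i j := lcaD_le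
  have hanc : Anc n i j x y L := anc_lcaD hx hy
  have hq1 : x / n ^ (i - L) < n ^ L := by
    apply Nat.div_lt_of_lt_mul
    calc x < n ^ i := hx
    _ = n ^ (i - L) * n ^ L := by rw [← pow_add]; congr 1; omega
  have hq2 : y / n ^ (j - L) < n ^ L := by
    apply Nat.div_lt_of_lt_mul
    calc y < n ^ j := hy
    _ = n ^ (j - L) * n ^ L := by rw [← pow_add]; congr 1; omega
  have hLh : L ≤ h := by omega
  obtain ⟨p1, hp1⟩ := exists_walk_down (h := h) hn (i - L) L i (by omega) hLh hi' x hx hq1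
  obtain ⟨p2, hp2⟩ := exists_walk_down (h := h) hn (j - L) L j (by omega) hLh hj' y hy hq2
  have hsame : vert n h L hLh (x / n ^ (i - L)) hq1
      = vert n h L hLh (y / n ^ (j - L)) hq2 := vert_congr _ _ _ _ hanc
  set p : (completeNaryTree n h).Walk (vert n h i hi' x hx) (vert n h j hj' y hy) :=
    p1.reverse.append (p2.copy hsame.symm rfl) with hpdef
  have hlen : p.length = (i - L) + (j - L) := by
    simp [hpdef, SimpleGraph.Walk.length_append, SimpleGraph.Walk.length_reverse,
      SimpleGraph.Walk.length_copy, hp1, hp2]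
  constructor
  · exact ⟨p⟩
  · calc (completeNaryTree n h).dist _ _ ≤ p.length := SimpleGraph.dist_le p
    _ = (i - L) + (j - L) := hlen
    _ ≤ dV ⟨⟨i, hi⟩, ⟨x, hx⟩⟩ ⟨⟨j, hj⟩, ⟨y, hy⟩⟩ := by
        unfold dV tdist
        simp only [Fin.val_mk]
        omega

lemma dist_eq_dV (hn : 1 ≤ n) (u v : Vtx n h) :
    (completeNaryTree n h).dist u v = dV u v := by
  obtain ⟨hreach, hle⟩ := dV_reach_dist hn u v
  refine le_antisymm hle ?_
  obtain ⟨p, hp⟩ := hreach.exists_walk_length_eq_dist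
  calc dV u v ≤ p.length := dV_walk_le hn p
  _ = _ := hp

lemma power_adj (hn : 1 ≤ n) {r : ℕ} (u v : Vtx n h) :
    ((completeNaryTree n h).power r).Adj u v ↔ u ≠ v ∧ dV u v ≤ r := by
  show (u ≠ v ∧ _ ∧ _) ↔ _
  rw [dist_eq_dV hn]
  have := (dV_reach_dist hn u v).1
  tauto

/-- interval characterization of division -/
lemma div_eq_iff_Ico {M c z : ℕ} (hM : 0 < M) : z / M = c ↔ c * M ≤ z ∧ z < c * M + M := by
  constructor
  · rintro rfl
    refine ⟨Nat.div_mul_le_self z M, ?_⟩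
    have h1 := Nat.mod_lt z hM
    have h2 := Nat.mod_add_div z M
    have h3 : M * (z / M) = z / M * M := Nat.mul_comm _ _
    omega
  · rintro ⟨h1, h2⟩
    exact Nat.div_eq_of_lt_le h1 (by rw [Nat.succ_mul]; omega)

/-- the number of vertices at depth `j` within distance `r` of a vertex at depth `i` -/
def fdeg (n r i j : ℕ) : ℕ :=
  if i ≤ j + r ∧ j ≤ i + r then n ^ (min j ((j + r - i) / 2)) else 0

lemma tdist_le_iff {r i j x y : ℕ} (hx : x < n ^ i) (hy : y < n ^ j) :
    tdist n i j x y ≤ r ↔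
      ((i + j + 1 - r) / 2 ≤ min i j ∧ Anc n i j x y ((i + j + 1 - r) / 2)) := by
  set k0 := (i + j + 1 - r) / 2 with hk0
  have hLm : lcaD n i j x y ≤ min i j := lcaD_le
  constructor
  · intro hle
    unfold tdist at hle
    have hk0L : k0 ≤ lcaD n i j x y := by omega
    refine ⟨by omega, ?_⟩
    exact anc_down (anc_lcaD hx hy) hk0L (by omega) (by omega)
  · rintro ⟨hkm, hanc⟩
    have := le_lcaD hkm hanc
    unfold tdist
    omega

lemma count_fiber {N M c : ℕ} (hM : 0 < M) (hcM : c * M + M ≤ N) :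
    ((univ : Finset (Fin N)).filter fun y : Fin N => (y : ℕ) / M = c).card = M := by
  rw [Finset.card_filter]
  rw [Fin.sum_univ_eq_sum_range (fun y => if y / M = c then (1:ℕ) else 0)]
  rw [← Finset.card_filter]
  have : (Finset.range N).filter (fun y => y / M = c) = Finset.Ico (c * M) (c * M + M) := by
    ext z
    simp only [Finset.mem_filter, Finset.mem_range, Finset.mem_Ico]
    rw [div_eq_iff_Ico hM]
    omega
  rw [this, Nat.card_Ico]
  omega

lemma count_level (hn : 1 ≤ n) {r i j x : ℕ} (hx : x < n ^ i) :
    ((univ : Finset (Fin (n ^ j))).filter fun y : Fin (n ^ j) => tdist n i j x (y : ℕ) ≤ r).card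
      = fdeg n r i j := by
  set k0 := (i + j + 1 - r) / 2 with hk0
  unfold fdeg
  by_cases hcond : i ≤ j + r ∧ j ≤ i + r
  · rw [if_pos hcond]
    have hk0i : k0 ≤ i := by omega
    have hk0j : k0 ≤ j := by omega
    set c := x / n ^ (i - k0) with hc
    have hcb : c < n ^ k0 := by
      apply Nat.div_lt_of_lt_mul
      calc x < n ^ i := hx
      _ = n ^ (i - k0) * n ^ k0 := by rw [← pow_add]; congr 1; omega
    have hfil : ∀ y : Fin (n ^ j), (tdist n i j x (y : ℕ) ≤ r ↔ (y : ℕ) / n ^ (j - k0) = c) := by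
      intro y
      rw [tdist_le_iff hx y.isLt]
      unfold Anc
      constructor
      · rintro ⟨-, e⟩; exact e.symm
      · intro e; exact ⟨by omega, e.symm⟩
    have hM : 0 < n ^ (j - k0) := Nat.pow_pos (by omega)
    have hNb : c * n ^ (j - k0) + n ^ (j - k0) ≤ n ^ j := by
      calc c * n ^ (j - k0) + n ^ (j - k0) = (c + 1) * n ^ (j - k0) := by ring
      _ ≤ n ^ k0 * n ^ (j - k0) := Nat.mul_le_mul_right _ (by omega)
      _ = n ^ j := by rw [← pow_add]; congr 1; omega
    calc ((univ : Finset (Fin (n ^ j))).filter fun y : Fin (n ^ j) => tdist n i j x (y : ℕ) ≤ r).card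
        = ((univ : Finset (Fin (n ^ j))).filter fun y : Fin (n ^ j) => (y : ℕ) / n ^ (j - k0) = c).card := by
          congr 1
          apply Finset.filter_congr
          intro y _
          exact hfil y
    _ = n ^ (j - k0) := count_fiber hM hNb
    _ = n ^ (min j ((j + r - i) / 2)) := by congr 1; omega
  · rw [if_neg hcond]
    rw [Finset.card_eq_zero, Finset.filter_eq_empty_iff]
    intro y _
    rw [tdist_le_iff hx y.isLt]
    rintro ⟨hkm, -⟩
    omega

/-- total ball count (including the center) for a vertex at depth `i` -/
def Dcount (n hh r i : ℕ) : ℕ := ∑ j ∈ Finset.range (hh + 1), fdeg n r i j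

lemma card_ball (hn : 1 ≤ n) {r : ℕ} (i : ℕ) (hi : i < h + 1) (x : ℕ) (hx : x < n ^ i) :
    ((univ : Finset (Vtx n h)).filter
        fun v => dV (⟨⟨i, hi⟩, ⟨x, hx⟩⟩ : Vtx n h) v ≤ r).card = Dcount n h r i := by
  rw [Finset.card_filter]
  rw [← Finset.univ_sigma_univ, Finset.sum_sigma]
  unfold Dcount
  rw [← Fin.sum_univ_eq_sum_range (fun j => fdeg n r i j)]
  apply Finset.sum_congr rfl
  intro j _
  rw [← Finset.card_filter]
  exact count_level hn hx

lemma gdeg_power (hn : 1 ≤ n) {r : ℕ} (i : ℕ) (hi : i < h + 1) (x : ℕ) (hx : x < n ^ i) :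
    gdeg ((completeNaryTree n h).power r) (⟨⟨i, hi⟩, ⟨x, hx⟩⟩ : Vtx n h)
      = Dcount n h r i - 1 := by
  set u : Vtx n h := ⟨⟨i, hi⟩, ⟨x, hx⟩⟩ with hu
  set S := (univ : Finset (Vtx n h)).filter (fun v => dV u v ≤ r) with hS
  have huS : u ∈ S := by
    rw [hS, Finset.mem_filter]
    exact ⟨Finset.mem_univ _, by rw [dV_self]; omega⟩
  have hset : ((completeNaryTree n h).power r).neighborSet u = ↑(S.erase u) := by
    ext v
    rw [SimpleGraph.mem_neighborSet, power_adj hn, Finset.mem_coe, Finset.mem_erase, hS,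
      Finset.mem_filter]
    constructor
    · rintro ⟨hne, hd⟩
      exact ⟨Ne.symm hne, Finset.mem_univ _, hd⟩
    · rintro ⟨hne, -, hd⟩
      exact ⟨Ne.symm hne, hd⟩
  unfold gdeg
  rw [hset, Set.ncard_coe_finset, Finset.card_erase_of_mem huS]
  rw [hS, card_ball hn i hi x hx]

section Arith

lemma fdeg_le {n h r i j : ℕ} (hn : 2 ≤ n) (hr1 : 1 ≤ r) (hi : i < h)
    (hj1 : h ≤ j + r) (hj2 : j ≤ h) :
    fdeg n r h j ≤ fdeg n r i (j - (h - i - r)) := by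
  have hc : j - (h - i - r) = j - (h - i - r) := rfl
  unfold fdeg
  rw [if_pos ⟨hj1, by omega⟩, if_pos ⟨by omega, by omega⟩]
  apply Nat.pow_le_pow_right (by omega)
  omega

lemma fdeg_strict {n h r i : ℕ} (hn : 2 ≤ n) (hr1 : 1 ≤ r) (hr2 : r ≤ 2 * h - 1)
    (hi : i < h) :
    ∃ j, (h - r ≤ j ∧ j ≤ h) ∧ fdeg n r h j < fdeg n r i (j - (h - i - r)) := by
  by_cases hA : r < h - i
  · refine ⟨h - r + 1, ⟨by omega, by omega⟩, ?_⟩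
    unfold fdeg
    rw [if_pos ⟨by omega, by omega⟩, if_pos ⟨by omega, by omega⟩]
    apply Nat.pow_lt_pow_right (by omega)
    omega
  · by_cases hB : r % 2 = 1
    · refine ⟨h, ⟨by omega, by omega⟩, ?_⟩
      unfold fdeg
      rw [if_pos ⟨by omega, by omega⟩, if_pos ⟨by omega, by omega⟩]
      apply Nat.pow_lt_pow_right (by omega)
      omega
    · refine ⟨h - 1, ⟨by omega, by omega⟩, ?_⟩
      unfold fdeg
      rw [if_pos ⟨by omega, by omega⟩, if_pos ⟨by omega, by omega⟩]
      apply Nat.pow_lt_pow_right (by omega)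
      omega

lemma Dcount_lt {n h r i : ℕ} (hn : 2 ≤ n) (hr1 : 1 ≤ r) (hr2 : r ≤ 2 * h - 1)
    (hi : i < h) : Dcount n h r h < Dcount n h r i := by
  have step1 : Dcount n h r h = ∑ j ∈ Finset.Icc (h - r) h, fdeg n r h j := by
    unfold Dcount
    refine (Finset.sum_subset ?_ ?_).symm
    · intro j hj
      rw [Finset.mem_Icc] at hj
      rw [Finset.mem_range]
      omega
    · intro j hj hnot
      rw [Finset.mem_Icc] at hnot
      rw [Finset.mem_range] at hj
      unfold fdeg
      rw [if_neg]
      rintro ⟨h1, -⟩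
      omega
  have step2 : ∑ j ∈ Finset.Icc (h - r) h, fdeg n r h j
      < ∑ j ∈ Finset.Icc (h - r) h, fdeg n r i (j - (h - i - r)) := by
    apply Finset.sum_lt_sum
    · intro j hj
      rw [Finset.mem_Icc] at hj
      exact fdeg_le hn hr1 hi (by omega) hj.2
    · obtain ⟨j, ⟨hj1, hj2⟩, hlt⟩ := fdeg_strict hn hr1 hr2 hi
      exact ⟨j, Finset.mem_Icc.mpr ⟨hj1, hj2⟩, hlt⟩
  have step3 : ∑ j ∈ Finset.Icc (h - r) h, fdeg n r i (j - (h - i - r))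
      = ∑ j' ∈ (Finset.Icc (h - r) h).image (fun j => j - (h - i - r)), fdeg n r i j' := by
    rw [Finset.sum_image]
    intro a ha b hb hab
    rw [Finset.mem_coe, Finset.mem_Icc] at ha hb
    simp only at hab
    omega
  have step4 : ∑ j' ∈ (Finset.Icc (h - r) h).image (fun j => j - (h - i - r)), fdeg n r i j'
      ≤ Dcount n h r i := by
    unfold Dcount
    apply Finset.sum_le_sum_of_subset
    intro j' hj'
    rw [Finset.mem_image] at hj'
    obtain ⟨j, hj, rfl⟩ := hj'
    rw [Finset.mem_Icc] at hj
    rw [Finset.mem_range]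
    omega
  omega

end Arith

lemma gdeg_power' (hn : 1 ≤ n) {r : ℕ} (u : Vtx n h) :
    gdeg ((completeNaryTree n h).power r) u = Dcount n h r (u.1 : ℕ) - 1 := by
  obtain ⟨⟨i, hi⟩, ⟨x, hx⟩⟩ := u
  exact gdeg_power hn i hi x hx

lemma Dcount_pos {n hh r : ℕ} (hn : 1 ≤ n) {i : ℕ} (hi : i ≤ hh) : 1 ≤ Dcount n hh r i := by
  unfold Dcount
  calc (1 : ℕ) ≤ fdeg n r i i := by
        unfold fdeg
        rw [if_pos ⟨by omega, by omega⟩]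
        exact Nat.one_le_pow _ _ (by omega)
  _ ≤ _ := Finset.single_le_sum (fun j _ => Nat.zero_le _) (Finset.mem_range.mpr (by omega))

lemma geom_le {n : ℕ} (hn : 2 ≤ n) : ∀ m : ℕ, ∑ j ∈ Finset.range m, n ^ j ≤ n ^ m - 1 := by
  intro m
  induction m with
  | zero => simp
  | succ m ih =>
    rw [Finset.sum_range_succ]
    have h1 : 1 ≤ n ^ m := Nat.one_le_pow _ _ (by omega)
    have h2 : 2 * n ^ m ≤ n ^ (m + 1) := by
      rw [pow_succ, mul_comm (n ^ m) n]
      exact Nat.mul_le_mul_right _ hn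
    omega

lemma F_eq (hn : 1 ≤ n) {r : ℕ} (v : Vtx n h) :
    ((univ : Finset (Vtx n h)).filter fun u =>
        gdeg ((completeNaryTree n h).power r) u = gdeg ((completeNaryTree n h).power r) v).card
      = ∑ j ∈ Finset.range (h + 1),
          if Dcount n h r j - 1 = Dcount n h r (v.1 : ℕ) - 1 then n ^ j else 0 := by
  rw [Finset.card_filter, ← Finset.univ_sigma_univ, Finset.sum_sigma]
  rw [← Fin.sum_univ_eq_sum_range
    (fun j => if Dcount n h r j - 1 = Dcount n h r (v.1 : ℕ) - 1 then n ^ j else 0)]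
  apply Finset.sum_congr rfl
  intro j _
  by_cases hc : Dcount n h r (j : ℕ) - 1 = Dcount n h r (v.1 : ℕ) - 1
  · rw [if_pos hc]
    calc (∑ y : Fin (n ^ (j : ℕ)), if gdeg ((completeNaryTree n h).power r) ⟨j, y⟩
            = gdeg ((completeNaryTree n h).power r) v then 1 else 0)
        = ∑ _y : Fin (n ^ (j : ℕ)), 1 := by
          apply Finset.sum_congr rfl
          intro y _
          rw [gdeg_power' hn ⟨j, y⟩, gdeg_power' hn v, if_pos hc]
    _ = n ^ (j : ℕ) := by simp
  · rw [if_neg hc]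
    calc (∑ y : Fin (n ^ (j : ℕ)), if gdeg ((completeNaryTree n h).power r) ⟨j, y⟩
            = gdeg ((completeNaryTree n h).power r) v then 1 else 0)
        = ∑ _y : Fin (n ^ (j : ℕ)), 0 := by
          apply Finset.sum_congr rfl
          intro y _
          rw [gdeg_power' hn ⟨j, y⟩, gdeg_power' hn v, if_neg hc]
    _ = 0 := by simp

end Graph

end NaryAux

/-- For `n ≥ 2`, the complete `n`-ary tree `T` of height `h ≥ 2`, and
`1 ≤ r ≤ 2h - 1`, the curling number of the `r`-th power `T^r` is `n ^ h`. -/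
theorem curlingNumber_completeNaryTree_power (n h r : ℕ) (hn : 2 ≤ n) (hh : 2 ≤ h)
    (hr1 : 1 ≤ r) (hr2 : r ≤ 2 * h - 1) :
    curlingNumber ((completeNaryTree n h).power r) = n ^ h := by
  classical
  have hn1 : 1 ≤ n := by omega
  -- E-level comparison
  have hElt : ∀ j : ℕ, j < h → NaryAux.Dcount n h r h - 1 < NaryAux.Dcount n h r j - 1 := by
    intro j hj
    have h1 := NaryAux.Dcount_lt (h := h) (r := r) hn hr1 hr2 hj
    have h2 := NaryAux.Dcount_pos (hh := h) (r := r) hn1 (le_refl h)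
    omega
  unfold curlingNumber
  apply le_antisymm
  · apply Finset.sup_le
    intro v _
    rw [NaryAux.F_eq hn1 v]
    rw [Finset.sum_range_succ]
    by_cases hc : NaryAux.Dcount n h r h - 1 = NaryAux.Dcount n h r (v.1 : ℕ) - 1
    · have hz : ∑ j ∈ Finset.range h,
          (if NaryAux.Dcount n h r j - 1 = NaryAux.Dcount n h r (v.1 : ℕ) - 1 then n ^ j else 0) = 0 := by
        apply Finset.sum_eq_zero
        intro j hj
        rw [Finset.mem_range] at hj
        rw [if_neg]
        intro he
        have := hElt j hj
        omega
      rw [hz, if_pos hc]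
      omega
    · rw [if_neg hc]
      have hb : ∑ j ∈ Finset.range h,
          (if NaryAux.Dcount n h r j - 1 = NaryAux.Dcount n h r (v.1 : ℕ) - 1 then n ^ j else 0)
          ≤ ∑ j ∈ Finset.range h, n ^ j := by
        apply Finset.sum_le_sum
        intro j _
        split <;> omega
      have hg := NaryAux.geom_le hn h
      have hp : 1 ≤ n ^ h := Nat.one_le_pow _ _ (by omega)
      omega
  · -- the leaf level witnesses
    have hleaf : (0 : ℕ) < n ^ h := Nat.pow_pos (by omega)
    set v0 : NaryAux.Vtx n h := ⟨⟨h, by omega⟩, ⟨0, hleaf⟩⟩ with hv0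
    refine le_trans ?_ (Finset.le_sup (Finset.mem_univ v0))
    rw [NaryAux.F_eq hn1 v0]
    rw [Finset.sum_range_succ]
    have he : (v0.1 : ℕ) = h := rfl
    rw [he, if_pos rfl]
    omega
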